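/- Let P be a finite poset with p elements that has neither a greatest element nor a least element, and let n ≥ 3p − 1. Then the percolation number satisfies sat_p(n, P) = p + 1. -/

import Mathlib

open Finset Filter

/-- An induced copy of the poset `α` inside the family `𝒜` of subsets of `Fin n`
(representing `[n] = {1,…,n}`): an injective map `f : α → Finset (Fin n)` with image
contained in `𝒜` such that `a ≤ b ↔ f a ⊆ f b`. -/
def IsInducedCopy {α : Type*} [PartialOrder α] {n : ℕ}
    (𝒜 : Finset (Finset (Fin n))) (f : α → Finset (Fin n)) : Prop :=
  Function.Injective f ∧ (∀ a, f a ∈ 𝒜) ∧ ∀ a b : α, a ≤ b ↔ f a ⊆ f b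

/-- The family `𝒜` contains an induced copy of the poset `α`. -/
def ContainsCopy (α : Type*) [PartialOrder α] {n : ℕ}
    (𝒜 : Finset (Finset (Fin n))) : Prop :=
  ∃ f : α → Finset (Fin n), IsInducedCopy 𝒜 f

/-- `𝒜` is a percolating family for `α`: the subsets of `[n]` outside `𝒜` can be ordered
as `A₁, …, A_N` so that, for each `i`, adding `A₁, …, Aᵢ` to `𝒜` creates an induced copy
of `α` containing `Aᵢ`. -/
def IsPercolating (α : Type*) [PartialOrder α] {n : ℕ}
    (𝒜 : Finset (Finset (Fin n))) : Prop :=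
  ∃ l : List (Finset (Fin n)), l.Nodup ∧ (∀ S : Finset (Fin n), S ∈ l ↔ S ∉ 𝒜) ∧
    ∀ i : Fin l.length, ∃ f : α → Finset (Fin n),
      IsInducedCopy (𝒜 ∪ (l.take (i + 1)).toFinset) f ∧ ∃ a : α, f a = l.get i

/-- The percolation number `sat_p(n, α)`: the minimum size of an `α`-percolating family
of subsets of `[n]`. -/
noncomputable def satP (α : Type*) [PartialOrder α] (n : ℕ) : ℕ :=
  sInf {k : ℕ | ∃ 𝒜 : Finset (Finset (Fin n)), IsPercolating α 𝒜 ∧ 𝒜.card = k}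

set_option linter.unusedSectionVars false

section Framework
variable {α : Type*} [PartialOrder α] {n : ℕ}

def ReachN (𝒜 : Finset (Finset (Fin n))) : ℕ → Finset (Fin n) → Prop
  | 0, S => S ∈ 𝒜
  | (k+1), S => ReachN 𝒜 k S ∨ ∃ 𝒢 : Finset (Finset (Fin n)),
      (∀ T ∈ 𝒢, ReachN 𝒜 k T) ∧ ∃ f : α → Finset (Fin n),
        IsInducedCopy (insert S 𝒢) f ∧ ∃ a, f a = S

def Reach (α : Type*) [PartialOrder α] {n : ℕ} (𝒜 : Finset (Finset (Fin n)))
    (S : Finset (Fin n)) : Prop :=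
  ∃ k, ReachN (α := α) 𝒜 k S

variable {𝒜 : Finset (Finset (Fin n))}

lemma reachN_mono {k k' : ℕ} (hk : k ≤ k') {S} (h : ReachN (α := α) 𝒜 k S) :
    ReachN (α := α) 𝒜 k' S := by
  induction k' with
  | zero => exact (Nat.le_zero.mp hk) ▸ h
  | succ m ih =>
    rcases Nat.lt_or_ge k (m+1) with h1 | h1
    · exact Or.inl (ih (by omega))
    · have : k = m + 1 := le_antisymm hk h1
      subst this; exact h

lemma reach_of_mem {S} (h : S ∈ 𝒜) : Reach α 𝒜 S := ⟨0, h⟩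

lemma injective_of_iff {g : α → Finset (Fin n)}
    (hiff : ∀ u v : α, u ≤ v ↔ g u ⊆ g v) : Function.Injective g := by
  intro a b hab
  exact le_antisymm ((hiff a b).2 (by rw [hab])) ((hiff b a).2 (by rw [hab]))

/-- the main step lemma: if all partners of a copy are reachable, the remaining
element is reachable -/
lemma reach_step [Fintype α] (g : α → Finset (Fin n)) (a : α)
    (hpart : ∀ b, b ≠ a → Reach α 𝒜 (g b))
    (hiff : ∀ u v : α, u ≤ v ↔ g u ⊆ g v) : Reach α 𝒜 (g a) := by
  classical
  set 𝒢 : Finset (Finset (Fin n)) :=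
    ((Finset.univ : Finset α).image g).erase (g a) with h𝒢
  have hre : ∀ T ∈ 𝒢, Reach α 𝒜 T := by
    intro T hT
    rw [h𝒢, Finset.mem_erase, Finset.mem_image] at hT
    obtain ⟨hne, b, _, rfl⟩ := hT
    exact hpart b (fun h => hne (by rw [h]))
  set k : ℕ := 𝒢.sup (fun T => if h : Reach α 𝒜 T then Nat.find h else 0) with hkdef
  have hk : ∀ T ∈ 𝒢, ReachN (α := α) 𝒜 k T := by
    intro T hT
    have h := hre T hT
    have h1 : Nat.find h ≤ k := by
      have := Finset.le_sup (f := fun T => if h : Reach α 𝒜 T then Nat.find h else 0) hT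
      simpa [dif_pos h] using this
    exact reachN_mono h1 (Nat.find_spec h)
  refine ⟨k + 1, Or.inr ⟨𝒢, hk, g, ⟨injective_of_iff hiff, ?_, hiff⟩, a, rfl⟩⟩
  intro b
  by_cases hb : g b = g a
  · rw [hb]; exact Finset.mem_insert_self _ _
  · exact Finset.mem_insert_of_mem (by
      rw [h𝒢, Finset.mem_erase]
      exact ⟨hb, Finset.mem_image_of_mem _ (Finset.mem_univ b)⟩)

lemma copy_mono {𝒜₁ 𝒜₂ : Finset (Finset (Fin n))} (hsub : 𝒜₁ ⊆ 𝒜₂)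
    {f : α → Finset (Fin n)} (h : IsInducedCopy 𝒜₁ f) : IsInducedCopy 𝒜₂ f :=
  ⟨h.1, fun a => hsub (h.2.1 a), h.2.2⟩

/-- Reachability of everything gives percolation. -/
lemma isPercolating_of_reach [Fintype α]
    (h : ∀ S : Finset (Fin n), Reach α 𝒜 S) : IsPercolating α 𝒜 := by
  classical
  set rank : Finset (Fin n) → ℕ := fun S => Nat.find (h S) with hrank
  set l : List (Finset (Fin n)) :=
    ((Finset.univ : Finset (Finset (Fin n))).filter (· ∉ 𝒜)).toList.mergeSort
      (fun S T => rank S ≤ rank T) with hl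
  have hperm : l.Perm ((Finset.univ : Finset (Finset (Fin n))).filter (· ∉ 𝒜)).toList :=
    List.mergeSort_perm _ _
  have hnodup : l.Nodup := hperm.nodup_iff.mpr (Finset.nodup_toList _)
  have hmem : ∀ S : Finset (Fin n), S ∈ l ↔ S ∉ 𝒜 := by
    intro S
    rw [hperm.mem_iff, Finset.mem_toList, Finset.mem_filter]
    simp
  have hsorted : ∀ i j : Fin l.length, i < j → rank (l.get i) ≤ rank (l.get j) := by
    have := List.pairwise_mergeSort (le := fun S T => decide (rank S ≤ rank T))
      (fun a b c hab hbc => by simp at *; omega)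
      (fun a b => by simp; omega)
      ((Finset.univ : Finset (Finset (Fin n))).filter (· ∉ 𝒜)).toList
    rw [List.pairwise_iff_get] at this
    intro i j hij
    have h2 := this i j hij
    simpa using h2
  refine ⟨l, hnodup, hmem, ?_⟩
  intro i
  set S := l.get i with hS
  have hSl : S ∈ l := l.get_mem i
  have hSA : S ∉ 𝒜 := (hmem S).1 hSl
  -- rank S ≥ 1
  have hrk : ReachN (α := α) 𝒜 (rank S) S := Nat.find_spec (h S)
  have hrkmin : ∀ j, j < rank S → ¬ ReachN (α := α) 𝒜 j S := fun j hj => Nat.find_min (h S) hj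
  obtain ⟨k, hk⟩ : ∃ k, rank S = k + 1 := by
    cases hr : rank S with
    | zero => exact absurd (by rw [hr] at hrk; exact hrk) hSA
    | succ k => exact ⟨k, rfl⟩
  rw [hk] at hrk
  rcases hrk with h1 | ⟨𝒢, h𝒢, f, hcopy, a, ha⟩
  · exact absurd h1 (hrkmin k (by omega))
  refine ⟨f, copy_mono ?_ hcopy, a, ha⟩
  intro T hT
  rcases Finset.mem_insert.mp hT with rfl | hT𝒢
  · refine Finset.mem_union_right _ (List.mem_toFinset.mpr ?_)
    have h2 : i.1 < (l.take (i.1+1)).length := by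
      have := i.isLt; rw [List.length_take]; omega
    have h3 := List.getElem_take (xs := l) (j := i.1+1) (i := i.1) (h := h2)
    have : S = l[i.1] := rfl
    rw [this, ← h3]
    exact List.getElem_mem h2
  · -- T has smaller rank
    have hTr : ReachN (α := α) 𝒜 k T := h𝒢 T hT𝒢
    have hrankT : rank T ≤ k := Nat.find_le hTr
    by_cases hTA : T ∈ 𝒜
    · exact Finset.mem_union_left _ hTA
    · have hTl : T ∈ l := (hmem T).2 hTA
      obtain ⟨j, hj⟩ := List.mem_iff_get.mp hTl
      refine Finset.mem_union_right _ (List.mem_toFinset.mpr ?_)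
      have hji : j.1 < i.1 + 1 := by
        by_contra hc
        have hij : i < j := by
          rcases lt_trichotomy i j with h' | h' | h'
          · exact h'
          · exfalso; omega
          · exfalso; exact hc (by omega)
        have := hsorted i j hij
        rw [hj] at this
        have h5 : rank (l.get i) = k + 1 := hk
        omega
      have h2 : j.1 < (l.take (i.1+1)).length := by
        have := i.isLt; rw [List.length_take]; omega
      have h3 := List.getElem_take (xs := l) (j := i.1+1) (i := j.1) (h := h2)
      have : T = l[j.1] := by rw [← hj]; rfl
      rw [this, ← h3]
      exact List.getElem_mem h2

end Framework
open Finset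

section Constr
variable {P : Type*} [PartialOrder P] [Fintype P] {n : ℕ}

open Classical in
noncomputable def fimg (wc : P ↪ Fin n) (w : P) : Finset (Fin n) :=
  (Finset.univ.filter (· ≤ w)).image wc

def Wset (wc : P ↪ Fin n) : Finset (Fin n) := Finset.univ.map wc

def Zset (wc : P ↪ Fin n) : Finset (Fin n) := (Wset wc)ᶜ

variable {wc : P ↪ Fin n}

lemma mem_fimg {c : Fin n} {w : P} : c ∈ fimg wc w ↔ ∃ u, u ≤ w ∧ wc u = c := by
  classical
  simp [fimg]

lemma wc_mem_fimg {u w : P} (h : u ≤ w) : wc u ∈ fimg wc w := mem_fimg.mpr ⟨u, h, rfl⟩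

lemma fimg_subset_W {w : P} : fimg wc w ⊆ Wset wc := by
  intro c hc
  obtain ⟨u, _, rfl⟩ := mem_fimg.mp hc
  simp [Wset]

lemma mem_Z_iff {c : Fin n} : c ∈ Zset wc ↔ c ∉ Wset wc := by simp [Zset]

lemma fimg_subset_iff {u w : P} : fimg wc u ⊆ fimg wc w ↔ u ≤ w := by
  constructor
  · intro h
    obtain ⟨v, hv, he⟩ := mem_fimg.mp (h (wc_mem_fimg (le_refl u)))
    rwa [← wc.injective he]
  · intro h c hc
    obtain ⟨v, hv, rfl⟩ := mem_fimg.mp hc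
    exact wc_mem_fimg (hv.trans h)

lemma subset_W_of_union {A B E : Finset (Fin n)} (hA : A ⊆ Wset wc) (hE : E ⊆ Zset wc)
    (h : A ⊆ B ∪ E) : A ⊆ B := by
  intro c hc
  rcases Finset.mem_union.mp (h hc) with h1 | h1
  · exact h1
  · exact absurd (hA hc) (mem_Z_iff.mp (hE h1))

end Constr

section Constr2
variable {P : Type*} [PartialOrder P] [Fintype P] {n : ℕ} {wc : P ↪ Fin n} {xM : P}

open Classical in
noncomputable def baseFam (wc : P ↪ Fin n) (xM : P) : Finset (Finset (Fin n)) :=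
  insert ∅ (insert Finset.univ ((Finset.univ.erase xM).image (fimg wc)))

lemma mem_baseFam_f {w : P} (h : w ≠ xM) : fimg wc w ∈ baseFam wc xM := by
  classical
  unfold baseFam
  apply Finset.mem_insert_of_mem
  apply Finset.mem_insert_of_mem
  rw [Finset.mem_image]
  exact ⟨w, by simp [h], rfl⟩

lemma empty_mem_baseFam : ∅ ∈ baseFam wc xM := Finset.mem_insert_self _ _

lemma univ_mem_baseFam : Finset.univ ∈ baseFam wc xM :=
  Finset.mem_insert_of_mem (Finset.mem_insert_self _ _)

lemma reach_f (w : P) : Reach P (baseFam wc xM) (fimg wc w) := by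
  by_cases h : w = xM
  · subst h
    exact reach_step (fimg wc) w (fun b hb => reach_of_mem (mem_baseFam_f hb))
      (fun u v => fimg_subset_iff.symm)
  · exact reach_of_mem (mem_baseFam_f h)

lemma reach_fE (w : P) (E : Finset (Fin n)) (hE : E ⊆ Zset wc) :
    Reach P (baseFam wc xM) (fimg wc w ∪ E) := by
  classical
  suffices H : ∀ m (w : P), ((Finset.univ.filter (w < ·)).card ≤ m) →
      ∀ E, E ⊆ Zset wc → Reach P (baseFam wc xM) (fimg wc w ∪ E) from
    H _ w le_rfl E hE
  intro m
  induction m using Nat.strong_induction_on with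
  | _ m IH =>
  intro w hw E hEZ
  rcases Finset.eq_empty_or_nonempty E with rfl | ⟨e, he⟩
  · simpa using reach_f (wc := wc) (xM := xM) w
  · set g : P → Finset (Fin n) := fun u => if w ≤ u then fimg wc u ∪ E else fimg wc u with hg
    have hgw : g w = fimg wc w ∪ E := by simp [hg]
    have hiff : ∀ u v : P, u ≤ v ↔ g u ⊆ g v := by
      intro u v
      by_cases hu : w ≤ u <;> by_cases hv : w ≤ v <;>
        simp only [hg, hu, hv, if_true, if_false, ite_true, ite_false, if_pos, if_neg,
          not_false_iff]
      · constructor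
        · intro h
          exact Finset.union_subset_union (fimg_subset_iff.mpr h) Finset.Subset.rfl
        · intro h
          exact fimg_subset_iff.mp (subset_W_of_union fimg_subset_W hEZ
            ((Finset.subset_union_left).trans h))
      · refine iff_of_false (fun h => hv (hu.trans h)) (fun h => ?_)
        have : e ∈ fimg wc v := h (Finset.mem_union_right _ he)
        exact absurd (fimg_subset_W this) (mem_Z_iff.mp (hEZ he))
      · constructor
        · intro h
          exact (fimg_subset_iff.mpr h).trans Finset.subset_union_left
        · intro h
          exact fimg_subset_iff.mp (subset_W_of_union fimg_subset_W hEZ h)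
      · exact fimg_subset_iff.symm
    rw [← hgw]
    refine reach_step g w ?_ hiff
    intro b hb
    by_cases hwb : w ≤ b
    · have hlt : w < b := lt_of_le_of_ne hwb (Ne.symm hb)
      have hsub : (Finset.univ.filter (b < ·)) ⊂ (Finset.univ.filter (w < ·)) := by
        constructor
        · intro v hv
          simp only [Finset.mem_filter, Finset.mem_univ, true_and] at *
          exact hlt.trans hv
        · intro hcon
          have : b ∈ Finset.univ.filter (w < ·) := by
            simp only [Finset.mem_filter, Finset.mem_univ, true_and]; exact hlt
          have := hcon this
          simp only [Finset.mem_filter, Finset.mem_univ, true_and] at this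
          exact lt_irrefl b this
      have hcard : (Finset.univ.filter (b < ·)).card < m :=
        lt_of_lt_of_le (Finset.card_lt_card hsub) hw
      have hres := IH _ hcard b le_rfl E hEZ
      simpa [hg, hwb] using hres
    · simpa [hg, hwb] using reach_f (wc := wc) (xM := xM) b

end Constr2

section Constr3
variable {P : Type*} [PartialOrder P] [Fintype P] {n : ℕ} {wc : P ↪ Fin n} {xM : P}

lemma reach_zoneOnly [Nonempty P] (S : Finset (Fin n)) (hSZ : S ⊆ Zset wc)
    (hSne : S.Nonempty) (hne2 : S ≠ Zset wc) : Reach P (baseFam wc xM) S := by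
  classical
  obtain ⟨x, -, hxmin⟩ : ∃ x ∈ (Finset.univ : Finset P), ∀ w ∈ Finset.univ, ¬ w < x := by
    obtain ⟨x, hx⟩ := Finset.exists_minimal (s := (Finset.univ : Finset P)) ⟨xM, Finset.mem_univ _⟩
    exact ⟨x, hx.1, fun w _ hlt => absurd (hx.2 (Finset.mem_univ w) hlt.le) (not_le_of_gt hlt)⟩
  have hxle : ∀ w : P, w ≤ x → w = x := by
    intro w hw
    by_contra hne
    exact hxmin w (Finset.mem_univ w) (lt_of_le_of_ne hw hne)
  obtain ⟨s₀, hs₀⟩ := hSne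
  obtain ⟨z₀, hz₀Z, hz₀S⟩ : ∃ z, z ∈ Zset wc ∧ z ∉ S := by
    obtain ⟨z, hz1, hz2⟩ := Finset.exists_of_ssubset (lt_of_le_of_ne hSZ hne2)
    exact ⟨z, hz1, hz2⟩
  set E : P → Finset (Fin n) := fun w => (if x ≤ w then S else S.erase s₀) ∪ {z₀} with hEdef
  have hEZ : ∀ w, E w ⊆ Zset wc := by
    intro w
    apply Finset.union_subset
    · split
      · exact hSZ
      · exact (Finset.erase_subset _ _).trans hSZ
    · simpa using hz₀Z
  set g : P → Finset (Fin n) := fun w => if w = x then S else fimg wc w ∪ E w with hg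
  have hgx : g x = S := by simp [hg]
  have hiff : ∀ u v : P, u ≤ v ↔ g u ⊆ g v := by
    intro u v
    by_cases hu : u = x <;> by_cases hv : v = x
    · rw [hu, hv]; simp
    · rw [hu]
      simp only [hg, if_pos rfl, if_neg hv]
      by_cases hxv : x ≤ v
      · refine iff_of_true hxv ?_
        calc S ⊆ E v := by rw [hEdef]; simp only [if_pos hxv]
                           exact Finset.subset_union_left
          _ ⊆ _ := Finset.subset_union_right
      · refine iff_of_false hxv (fun h => ?_)
        have := h hs₀
        rcases Finset.mem_union.mp this with h1 | h1
        · exact absurd (fimg_subset_W h1) (mem_Z_iff.mp (hSZ hs₀))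
        · rcases Finset.mem_union.mp h1 with h2 | h2
          · rw [if_neg hxv] at h2
            exact (Finset.mem_erase.mp h2).1 rfl
          · rw [Finset.mem_singleton] at h2
            exact hz₀S (h2 ▸ hs₀)
    · rw [hv]
      simp only [hg, if_pos rfl, if_neg hu]
      refine iff_of_false (fun h => hu (hxle u h)) (fun h => ?_)
      have : z₀ ∈ S := h (Finset.mem_union_right _ (Finset.mem_union_right _ (Finset.mem_singleton_self _)))
      exact hz₀S this
    · simp only [hg, if_neg hu, if_neg hv]
      constructor
      · intro huv
        apply Finset.union_subset_union (fimg_subset_iff.mpr huv)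
        rw [hEdef]
        apply Finset.union_subset_union _ Finset.Subset.rfl
        by_cases hxu : x ≤ u
        · rw [if_pos hxu, if_pos (hxu.trans huv)]
        · rw [if_neg hxu]
          split
          · exact Finset.erase_subset _ _
          · exact Finset.Subset.rfl
      · intro h
        have h1 : fimg wc u ⊆ fimg wc v ∪ E v := (Finset.subset_union_left).trans h
        exact fimg_subset_iff.mp (subset_W_of_union fimg_subset_W (hEZ v) h1)
  rw [← hgx]
  refine reach_step g x ?_ hiff
  intro b hb
  have : g b = fimg wc b ∪ E b := by simp [hg, hb]
  rw [this]
  exact reach_fE b (E b) (hEZ b)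

end Constr3

section Helper
variable {n : ℕ}

lemma exists_inj_to_finset {Q : Type*} [Fintype Q] (s : Finset (Fin n))
    (h : Fintype.card Q ≤ s.card) :
    ∃ κ : Q → Fin n, Function.Injective κ ∧ ∀ q, κ q ∈ s := by
  classical
  let e1 := Fintype.equivFin Q
  let iso := s.orderIsoOfFin rfl
  refine ⟨fun q => (iso (Fin.castLE h (e1 q))).1, ?_, fun q => (iso _).2⟩
  intro a b hab
  have : iso (Fin.castLE h (e1 a)) = iso (Fin.castLE h (e1 b)) := Subtype.ext hab
  have := iso.injective this
  have : (e1 a : Fin _) = e1 b := by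
    have h2 := congrArg Fin.val this
    simp at h2
    exact Fin.ext h2
  exact e1.injective this

end Helper

section Step
variable {P : Type*} [PartialOrder P] [Fintype P] [Nonempty P] {n : ℕ}
  {wc : P ↪ Fin n} {xM : P}

lemma step_lemma
    (hZcard : 2 * Fintype.card P - 1 ≤ (Zset wc).card)
    (hp2 : 2 ≤ Fintype.card P)
    (Ck : Finset (Fin n)) (hZC : Zset wc ⊆ Ck) (ν : Fin n) (hν : ν ∉ Ck)
    (Hk : ∀ X ⊆ Ck, ¬ (Zset wc ⊆ X) → Reach P (baseFam wc xM) X) :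
    ∀ S, S ⊆ insert ν Ck → ν ∈ S → ¬ (Zset wc ⊆ S) → Reach P (baseFam wc xM) S := by
  classical
  suffices H : ∀ m : ℕ, ∀ S, S ⊆ insert ν Ck → ν ∈ S → ¬ (Zset wc ⊆ S) →
      (Ck \ S).card ≤ m → Reach P (baseFam wc xM) S by
    intro S h1 h2 h3
    exact H _ S h1 h2 h3 le_rfl
  intro m
  induction m using Nat.strong_induction_on with
  | _ m IH =>
  intro S hSsub hνS hZS hm
  set T := S.erase ν with hTdef
  have hTCk : T ⊆ Ck := by
    intro c hc
    obtain ⟨hc1, hc2⟩ := Finset.mem_erase.mp hc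
    rcases Finset.mem_insert.mp (hSsub hc2) with h | h
    · exact absurd h hc1
    · exact h
  have hSins : S = insert ν T := (Finset.insert_erase hνS).symm
  have hZT : ¬ (Zset wc ⊆ T) := fun h => hZS (h.trans (Finset.erase_subset _ _))
  have hCkS : Ck \ S = Ck \ T := by
    ext c
    simp only [Finset.mem_sdiff]
    constructor
    · rintro ⟨h1, h2⟩; exact ⟨h1, fun hc => h2 ((Finset.erase_subset _ _) hc)⟩
    · rintro ⟨h1, h2⟩
      refine ⟨h1, fun hc => ?_⟩
      have hc2 : c ∈ insert ν T := hSins ▸ hc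
      rcases Finset.mem_insert.mp hc2 with rfl | hc3
      · exact hν h1
      · exact h2 hc3
  have hνT : ν ∉ T := fun h => hν (hTCk h)
  have hνZ : ν ∉ Zset wc := fun h => hν (hZC h)
  by_cases hbig : Fintype.card P ≤ (T ∩ Zset wc).card
  · -- BIG case : x maximal
    obtain ⟨κ, hκinj, hκmem⟩ := exists_inj_to_finset (Q := P) (T ∩ Zset wc) hbig
    have hκT : ∀ u, κ u ∈ T := fun u => (Finset.mem_inter.mp (hκmem u)).1
    have hκZ : ∀ u, κ u ∈ Zset wc := fun u => (Finset.mem_inter.mp (hκmem u)).2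
    obtain ⟨x, -, hxmax⟩ : ∃ x ∈ (Finset.univ : Finset P), ∀ w ∈ Finset.univ, ¬ x < w := by
      obtain ⟨x, hx⟩ := Finset.exists_maximal (s := (Finset.univ : Finset P)) ⟨xM, Finset.mem_univ _⟩
      exact ⟨x, hx.1, fun w _ hlt => absurd (hx.2 (Finset.mem_univ w) hlt.le) (not_le_of_gt hlt)⟩
    have hxle : ∀ w, x ≤ w → w = x := by
      intro w hw
      by_contra hne
      exact hxmax w (Finset.mem_univ _) (lt_of_le_of_ne hw (Ne.symm hne))
    obtain ⟨t₀, ht₀⟩ : (Ck \ T).Nonempty := by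
      rw [Finset.sdiff_nonempty]
      intro hsub
      exact hZT (hZC.trans hsub)
    obtain ⟨ht₀Ck, ht₀T⟩ := Finset.mem_sdiff.mp ht₀
    have ht₀S : t₀ ∉ S := by
      rw [hSins]
      intro h
      rcases Finset.mem_insert.mp h with rfl | h
      · exact hν ht₀Ck
      · exact ht₀T h
    set Rm : P → Finset (Fin n) := fun w =>
      (Finset.univ.filter (fun u => ¬(u ≤ w))).image κ with hRmdef
    have hmemRm : ∀ c (w : P), c ∈ Rm w ↔ ∃ u, ¬(u ≤ w) ∧ κ u = c := by
      intro c w; simp [hRmdef]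
    have hκRm : ∀ u (w : P), κ u ∈ Rm w ↔ ¬ (u ≤ w) := by
      intro u w
      rw [hmemRm]
      constructor
      · rintro ⟨u', hu', he⟩
        rwa [← hκinj he]
      · intro h; exact ⟨u, h, rfl⟩
    set g : P → Finset (Fin n) := fun w =>
      if w = x then S else ((T \ Rm w) ∪ (if w ≤ x then ∅ else {t₀})) with hgdef
    have hgx : g x = S := by simp [hgdef]
    have hmem_g : ∀ b, b ≠ x → ∀ c, (c ∈ g b ↔ ((c ∈ T ∧ c ∉ Rm b) ∨ (¬(b ≤ x) ∧ c = t₀))) := by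
      intro b hb c
      by_cases hbx : b ≤ x <;>
        simp [hgdef, hb, hbx, Finset.mem_union, Finset.mem_sdiff, or_comm]
    have hiff : ∀ u v : P, u ≤ v ↔ g u ⊆ g v := by
      intro u v
      by_cases hu : u = x <;> by_cases hv : v = x
      · rw [hu, hv]; simp
      · -- u = x, v ≠ x
        rw [hu]
        refine iff_of_false (fun h => hv (hxle v h)) (fun h => ?_)
        rw [hgx] at h
        have := (hmem_g v hv ν).mp (h hνS)
        rcases this with ⟨h1, -⟩ | ⟨-, h1⟩
        · exact hνT h1
        · exact hν (h1 ▸ ht₀Ck)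
      · -- v = x : u ≤ x ↔ g u ⊆ S
        rw [hv, hgx]
        by_cases hux : u ≤ x
        · refine iff_of_true hux (fun c hc => ?_)
          rcases (hmem_g u hu c).mp hc with ⟨h1, -⟩ | ⟨h1, -⟩
          · rw [hSins]; exact Finset.mem_insert_of_mem h1
          · exact absurd hux h1
        · refine iff_of_false hux (fun h => ?_)
          have : t₀ ∈ g u := (hmem_g u hu t₀).mpr (Or.inr ⟨hux, rfl⟩)
          exact ht₀S (h this)
      · -- both ≠ x
        constructor
        · intro huv c hc
          rcases (hmem_g u hu c).mp hc with ⟨h1, h2⟩ | ⟨h1, rfl⟩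
          · refine (hmem_g v hv c).mpr (Or.inl ⟨h1, fun hc2 => ?_⟩)
            obtain ⟨a, ha1, ha2⟩ := (hmemRm c v).mp hc2
            apply h2
            rw [← ha2]
            exact (hκRm a u).mpr (fun h => ha1 (h.trans huv))
          · exact (hmem_g v hv c).mpr (Or.inr ⟨fun h => h1 (huv.trans h), rfl⟩)
        · intro h
          by_contra huv
          have h1 : κ u ∈ g u := (hmem_g u hu (κ u)).mpr
            (Or.inl ⟨hκT u, fun hc => ((hκRm u u).mp hc) le_rfl⟩)
          rcases (hmem_g v hv (κ u)).mp (h h1) with ⟨-, h2⟩ | ⟨-, h2⟩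
          · exact h2 ((hκRm u v).mpr huv)
          · exact ht₀T (h2 ▸ hκT u)
    rw [← hgx]
    refine reach_step g x ?_ hiff
    intro b hb
    apply Hk
    · intro c hc
      rcases (hmem_g b hb c).mp hc with ⟨h1, -⟩ | ⟨-, rfl⟩
      · exact hTCk h1
      · exact ht₀Ck
    · intro hcon
      have h1 : κ x ∈ g b := hcon (hκZ x)
      rcases (hmem_g b hb (κ x)).mp h1 with ⟨-, h2⟩ | ⟨-, h2⟩
      · exact h2 ((hκRm x b).mpr (fun h => hb (hxle b h)))
      · exact ht₀T (h2 ▸ hκT x)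
  · -- SMALL case : x minimal
    have hZTcard : Fintype.card P ≤ ((Zset wc) \ T).card := by
      have h1 := Finset.card_sdiff_add_card_inter (Zset wc) T
      have h2 : (Zset wc ∩ T).card = (T ∩ Zset wc).card := by rw [Finset.inter_comm]
      omega
    obtain ⟨κ, hκinj, hκmem⟩ := exists_inj_to_finset (Q := P) ((Zset wc) \ T) hZTcard
    have hκZ : ∀ u, κ u ∈ Zset wc := fun u => (Finset.mem_sdiff.mp (hκmem u)).1
    have hκT : ∀ u, κ u ∉ T := fun u => (Finset.mem_sdiff.mp (hκmem u)).2
    have hκν : ∀ u, κ u ≠ ν := fun u h => hνZ (h ▸ hκZ u)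
    have hκS : ∀ u, κ u ∉ S := by
      intro u h
      rw [hSins] at h
      rcases Finset.mem_insert.mp h with h | h
      · exact hκν u h
      · exact hκT u h
    obtain ⟨x, -, hxmin⟩ : ∃ x ∈ (Finset.univ : Finset P), ∀ w ∈ Finset.univ, ¬ w < x := by
      obtain ⟨x, hx⟩ := Finset.exists_minimal (s := (Finset.univ : Finset P)) ⟨xM, Finset.mem_univ _⟩
      exact ⟨x, hx.1, fun w _ hlt => absurd (hx.2 (Finset.mem_univ w) hlt.le) (not_le_of_gt hlt)⟩
    have hxle : ∀ w, w ≤ x → w = x := by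
      intro w hw
      by_contra hne
      exact hxmin w (Finset.mem_univ _) (lt_of_le_of_ne hw hne)
    set Ad : P → Finset (Fin n) := fun w =>
      (Finset.univ.filter (fun u => u ≠ x ∧ u ≤ w)).image κ with hAddef
    have hmemAd : ∀ c (w : P), c ∈ Ad w ↔ ∃ u, (u ≠ x ∧ u ≤ w) ∧ κ u = c := by
      intro c w; simp [hAddef]
    have hκAd : ∀ u (w : P), κ u ∈ Ad w ↔ (u ≠ x ∧ u ≤ w) := by
      intro u w
      rw [hmemAd]
      constructor
      · rintro ⟨u', hu', he⟩; rwa [← hκinj he]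
      · intro h; exact ⟨u, h, rfl⟩
    set g : P → Finset (Fin n) := fun w =>
      if w = x then S else (T ∪ Ad w ∪ (if x ≤ w then {ν} else ∅)) with hgdef
    have hgx : g x = S := by simp [hgdef]
    have hmem_g : ∀ b, b ≠ x → ∀ c, (c ∈ g b ↔ (c ∈ T ∨ c ∈ Ad b ∨ (x ≤ b ∧ c = ν))) := by
      intro b hb c
      by_cases hbx : x ≤ b <;>
        simp [hgdef, hb, hbx, Finset.mem_union, or_assoc, or_comm, or_left_comm]
    have hiff : ∀ u v : P, u ≤ v ↔ g u ⊆ g v := by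
      intro u v
      by_cases hu : u = x <;> by_cases hv : v = x
      · rw [hu, hv]; simp
      · -- u = x, v ≠ x : x ≤ v ↔ S ⊆ g v
        rw [hu, hgx]
        by_cases hxv : x ≤ v
        · refine iff_of_true hxv (fun c hc => ?_)
          rw [hSins] at hc
          rcases Finset.mem_insert.mp hc with rfl | hc
          · exact (hmem_g v hv c).mpr (Or.inr (Or.inr ⟨hxv, rfl⟩))
          · exact (hmem_g v hv c).mpr (Or.inl hc)
        · refine iff_of_false hxv (fun h => ?_)
          rcases (hmem_g v hv ν).mp (h hνS) with h1 | h1 | ⟨h1, -⟩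
          · exact hνT h1
          · obtain ⟨a, -, ha⟩ := (hmemAd ν v).mp h1
            exact hκν a ha
          · exact hxv h1
      · -- v = x : u ≤ x ↔ g u ⊆ S
        rw [hv, hgx]
        refine iff_of_false (fun h => hu (hxle u h)) (fun h => ?_)
        have h1 : κ u ∈ g u := (hmem_g u hu (κ u)).mpr (Or.inr (Or.inl ((hκAd u u).mpr ⟨hu, le_refl u⟩)))
        exact hκS u (h h1)
      · constructor
        · intro huv c hc
          rcases (hmem_g u hu c).mp hc with h1 | h1 | ⟨h1, rfl⟩
          · exact (hmem_g v hv c).mpr (Or.inl h1)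
          · obtain ⟨a, ⟨ha1, ha2⟩, ha3⟩ := (hmemAd c u).mp h1
            exact (hmem_g v hv c).mpr (Or.inr (Or.inl ((hmemAd c v).mpr ⟨a, ⟨ha1, ha2.trans huv⟩, ha3⟩)))
          · exact (hmem_g v hv c).mpr (Or.inr (Or.inr ⟨h1.trans huv, rfl⟩))
        · intro h
          by_contra huv
          have h1 : κ u ∈ g u := (hmem_g u hu (κ u)).mpr (Or.inr (Or.inl ((hκAd u u).mpr ⟨hu, le_refl u⟩)))
          rcases (hmem_g v hv (κ u)).mp (h h1) with h2 | h2 | ⟨-, h2⟩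
          · exact hκT u h2
          · exact huv ((hκAd u v).mp h2).2
          · exact hκν u h2
    rw [← hgx]
    refine reach_step g x ?_ hiff
    intro b hb
    by_cases hxb : x ≤ b
    · -- partner in the fiber, strictly larger : use IH
      have hgb : g b = T ∪ Ad b ∪ {ν} := by simp [hgdef, hb, hxb]
      have hsub2 : g b ⊆ insert ν Ck := by
        rw [hgb]
        intro c hc
        rcases Finset.mem_union.mp hc with hc | hc
        · rcases Finset.mem_union.mp hc with hc | hc
          · exact Finset.mem_insert_of_mem (hTCk hc)
          · obtain ⟨a, -, ha⟩ := (hmemAd c b).mp hc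
            exact Finset.mem_insert_of_mem (hZC (ha ▸ hκZ a))
        · rw [Finset.mem_singleton] at hc
          exact hc ▸ Finset.mem_insert_self _ _
      have hν2 : ν ∈ g b := by rw [hgb]; exact Finset.mem_union_right _ (Finset.mem_singleton_self _)
      have hZ2 : ¬ (Zset wc ⊆ g b) := by
        intro hcon
        have h1 : κ x ∈ g b := hcon (hκZ x)
        rw [hgb] at h1
        rcases Finset.mem_union.mp h1 with h1 | h1
        · rcases Finset.mem_union.mp h1 with h1 | h1
          · exact hκT x h1
          · exact (((hκAd x b).mp h1).1) rfl
        · exact hκν x (Finset.mem_singleton.mp h1)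
      have hlt : (Ck \ g b).card < m := by
        have hss : Ck \ g b ⊂ Ck \ T := by
          constructor
          · intro c hc
            obtain ⟨h1, h2⟩ := Finset.mem_sdiff.mp hc
            refine Finset.mem_sdiff.mpr ⟨h1, fun hc2 => ?_⟩
            exact h2 (by rw [hgb]; exact Finset.mem_union_left _ (Finset.mem_union_left _ hc2))
          · intro hcon
            have h1 : κ b ∈ Ck \ T := Finset.mem_sdiff.mpr ⟨hZC (hκZ b), hκT b⟩
            have h2 := hcon h1
            obtain ⟨-, h3⟩ := Finset.mem_sdiff.mp h2
            exact h3 (by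
              rw [hgb]
              exact Finset.mem_union.mpr (Or.inl (Finset.mem_union.mpr
                (Or.inr ((hκAd b b).mpr ⟨hb, le_refl b⟩)))))
        calc (Ck \ g b).card < (Ck \ T).card := Finset.card_lt_card hss
          _ = (Ck \ S).card := by rw [hCkS]
          _ ≤ m := hm
      exact IH _ hlt (g b) hsub2 hν2 hZ2 le_rfl
    · -- partner inside Ck : use Hk
      have hgb : g b = T ∪ Ad b := by simp [hgdef, hb, hxb]
      apply Hk
      · rw [hgb]
        intro c hc
        rcases Finset.mem_union.mp hc with hc | hc
        · exact hTCk hc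
        · obtain ⟨a, -, ha⟩ := (hmemAd c b).mp hc
          exact hZC (ha ▸ hκZ a)
      · intro hcon
        have h1 : κ x ∈ g b := hcon (hκZ x)
        rw [hgb] at h1
        rcases Finset.mem_union.mp h1 with h1 | h1
        · exact hκT x h1
        · exact (((hκAd x b).mp h1).1) rfl

end Step

section Assemble
variable {P : Type*} [PartialOrder P] [Fintype P] [Nonempty P] {n : ℕ}
  {wc : P ↪ Fin n} {xM : P}

open Classical in
noncomputable def Cset (wc : P ↪ Fin n) (k : ℕ) : Finset (Fin n) :=
  Zset wc ∪ (Finset.univ.filter (fun i : Fin (Fintype.card P) => i.1 < k)).image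
    (fun i => wc ((Fintype.equivFin P).symm i))

lemma phase5 (hZcard : 2 * Fintype.card P - 1 ≤ (Zset wc).card)
    (hp2 : 2 ≤ Fintype.card P) :
    ∀ X : Finset (Fin n), ¬ (Zset wc ⊆ X) → Reach P (baseFam wc xM) X := by
  classical
  have key : ∀ k, k ≤ Fintype.card P → ∀ X ⊆ Cset wc k, ¬ (Zset wc ⊆ X) →
      Reach P (baseFam wc xM) X := by
    intro k
    induction k with
    | zero =>
      intro _ X hX1 hX2
      have hXZ : X ⊆ Zset wc := by
        intro c hc
        have := hX1 hc
        simp only [Cset, Finset.mem_union, Finset.mem_image] at this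
        rcases this with h | ⟨i, hi, -⟩
        · exact h
        · simp at hi
      rcases Finset.eq_empty_or_nonempty X with rfl | hne
      · exact reach_of_mem empty_mem_baseFam
      · exact reach_zoneOnly X hXZ hne (fun h => hX2 (h ▸ Finset.Subset.refl _))
    | succ k IHk =>
      intro hk X hX1 hX2
      have hkp : k < Fintype.card P := hk
      set ν : Fin n := wc ((Fintype.equivFin P).symm ⟨k, hkp⟩) with hνdef
      have hνW : ν ∈ Wset wc := by simp [Wset, hνdef]
      have hνC : ν ∉ Cset wc k := by
        simp only [Cset, Finset.mem_union, Finset.mem_image, not_or]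
        constructor
        · rw [mem_Z_iff]; exact fun h => h hνW
        · rintro ⟨i, hi, he⟩
          simp only [Finset.mem_filter, Finset.mem_univ, true_and] at hi
          have : ((Fintype.equivFin P).symm i) = ((Fintype.equivFin P).symm ⟨k, hkp⟩) :=
            wc.injective he
          have : i = (⟨k, hkp⟩ : Fin (Fintype.card P)) := (Fintype.equivFin P).symm.injective this
          rw [this] at hi
          exact lt_irrefl k hi
      have hCsucc : Cset wc (k+1) = insert ν (Cset wc k) := by
        ext c
        simp only [Cset, Finset.mem_union, Finset.mem_image, Finset.mem_insert,
          Finset.mem_filter, Finset.mem_univ, true_and]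
        constructor
        · rintro (h | ⟨i, hi, rfl⟩)
          · exact Or.inr (Or.inl h)
          · rcases Nat.lt_succ_iff_lt_or_eq.mp hi with h | h
            · exact Or.inr (Or.inr ⟨i, h, rfl⟩)
            · left
              rw [hνdef]
              congr 1
              exact congrArg _ (Fin.ext h)
        · rintro (rfl | h | ⟨i, hi, rfl⟩)
          · exact Or.inr ⟨⟨k, hkp⟩, Nat.lt_succ_self k, rfl⟩
          · exact Or.inl h
          · exact Or.inr ⟨i, Nat.lt_succ_of_lt hi, rfl⟩
      have hZC : Zset wc ⊆ Cset wc k := Finset.subset_union_left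
      by_cases hνX : ν ∈ X
      · refine step_lemma hZcard hp2 (Cset wc k) hZC ν hνC
          (fun Y hY1 hY2 => IHk (le_of_lt hkp) Y hY1 hY2) X ?_ hνX hX2
        rw [← hCsucc]; exact hX1
      · apply IHk (le_of_lt hkp) X _ hX2
        intro c hc
        have := hX1 hc
        rw [hCsucc] at this
        rcases Finset.mem_insert.mp this with rfl | h
        · exact absurd hc hνX
        · exact h
  intro X hX
  refine key (Fintype.card P) le_rfl X ?_ hX
  intro c hc
  by_cases h : c ∈ Zset wc
  · exact Finset.mem_union_left _ h
  · apply Finset.mem_union_right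
    rw [mem_Z_iff, not_not, Wset, Finset.mem_map] at h
    obtain ⟨u, -, rfl⟩ := h
    refine Finset.mem_image.mpr ⟨Fintype.equivFin P u, ?_, by simp⟩
    simp [Fin.is_lt]

lemma phase6 (hZcard : 2 * Fintype.card P - 1 ≤ (Zset wc).card)
    (hp2 : 2 ≤ Fintype.card P)
    (S : Finset (Fin n)) (hZS : Zset wc ⊆ S) (hSuniv : S ≠ Finset.univ) :
    Reach P (baseFam wc xM) S := by
  classical
  have h5 := phase5 (wc := wc) (xM := xM) hZcard hp2
  obtain ⟨t₀, -, ht₀S⟩ : ∃ t₀, t₀ ∈ Finset.univ ∧ t₀ ∉ S := by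
    have : S ⊂ Finset.univ := lt_of_le_of_ne (Finset.subset_univ S) hSuniv
    obtain ⟨t, ht1, ht2⟩ := Finset.exists_of_ssubset this
    exact ⟨t, ht1, ht2⟩
  have hpZ : Fintype.card P ≤ (Zset wc).card := by omega
  obtain ⟨κ, hκinj, hκmem⟩ := exists_inj_to_finset (Q := P) (Zset wc) hpZ
  have hκS : ∀ u, κ u ∈ S := fun u => hZS (hκmem u)
  have hκt₀ : ∀ u, κ u ≠ t₀ := fun u h => ht₀S (h ▸ hκS u)
  obtain ⟨x, -, hxmax⟩ : ∃ x ∈ (Finset.univ : Finset P), ∀ w ∈ Finset.univ, ¬ x < w := by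
    obtain ⟨x, hx⟩ := Finset.exists_maximal (s := (Finset.univ : Finset P)) ⟨xM, Finset.mem_univ _⟩
    exact ⟨x, hx.1, fun w _ hlt => absurd (hx.2 (Finset.mem_univ w) hlt.le) (not_le_of_gt hlt)⟩
  have hxle : ∀ w, x ≤ w → w = x := by
    intro w hw
    by_contra hne
    exact hxmax w (Finset.mem_univ _) (lt_of_le_of_ne hw (Ne.symm hne))
  set Rm : P → Finset (Fin n) := fun w =>
    (Finset.univ.filter (fun u => ¬(u ≤ w))).image κ with hRmdef
  have hmemRm : ∀ c (w : P), c ∈ Rm w ↔ ∃ u, ¬(u ≤ w) ∧ κ u = c := by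
    intro c w; simp [hRmdef]
  have hκRm : ∀ u (w : P), κ u ∈ Rm w ↔ ¬ (u ≤ w) := by
    intro u w
    rw [hmemRm]
    constructor
    · rintro ⟨u', hu', he⟩; rwa [← hκinj he]
    · intro h; exact ⟨u, h, rfl⟩
  set g : P → Finset (Fin n) := fun w =>
    if w = x then S else ((S \ Rm w) ∪ (if w ≤ x then ∅ else {t₀})) with hgdef
  have hgx : g x = S := by simp [hgdef]
  have hmem_g : ∀ b, b ≠ x → ∀ c, (c ∈ g b ↔ ((c ∈ S ∧ c ∉ Rm b) ∨ (¬(b ≤ x) ∧ c = t₀))) := by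
    intro b hb c
    by_cases hbx : b ≤ x <;>
      simp [hgdef, hb, hbx, Finset.mem_union, Finset.mem_sdiff, or_comm]
  have hκx_not : ∀ b, b ≠ x → κ x ∉ g b := by
    intro b hb hcon
    rcases (hmem_g b hb (κ x)).mp hcon with ⟨-, h2⟩ | ⟨-, h2⟩
    · exact h2 ((hκRm x b).mpr (fun h => hb (hxle b h)))
    · exact hκt₀ x h2
  have hiff : ∀ u v : P, u ≤ v ↔ g u ⊆ g v := by
    intro u v
    by_cases hu : u = x <;> by_cases hv : v = x
    · rw [hu, hv]; simp
    · rw [hu]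
      refine iff_of_false (fun h => hv (hxle v h)) (fun h => ?_)
      rw [hgx] at h
      exact hκx_not v hv (h (hκS x))
    · rw [hv, hgx]
      by_cases hux : u ≤ x
      · refine iff_of_true hux (fun c hc => ?_)
        rcases (hmem_g u hu c).mp hc with ⟨h1, -⟩ | ⟨h1, -⟩
        · exact h1
        · exact absurd hux h1
      · refine iff_of_false hux (fun h => ?_)
        have : t₀ ∈ g u := (hmem_g u hu t₀).mpr (Or.inr ⟨hux, rfl⟩)
        exact ht₀S (h this)
    · constructor
      · intro huv c hc
        rcases (hmem_g u hu c).mp hc with ⟨h1, h2⟩ | ⟨h1, rfl⟩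
        · refine (hmem_g v hv c).mpr (Or.inl ⟨h1, fun hc2 => ?_⟩)
          obtain ⟨a, ha1, ha2⟩ := (hmemRm c v).mp hc2
          apply h2
          rw [← ha2]
          exact (hκRm a u).mpr (fun h => ha1 (h.trans huv))
        · exact (hmem_g v hv c).mpr (Or.inr ⟨fun h => h1 (huv.trans h), rfl⟩)
      · intro h
        by_contra huv
        have h1 : κ u ∈ g u := (hmem_g u hu (κ u)).mpr
          (Or.inl ⟨hκS u, fun hc => ((hκRm u u).mp hc) le_rfl⟩)
        rcases (hmem_g v hv (κ u)).mp (h h1) with ⟨-, h2⟩ | ⟨-, h2⟩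
        · exact h2 ((hκRm u v).mpr huv)
        · exact hκt₀ u h2
  rw [← hgx]
  refine reach_step g x ?_ hiff
  intro b hb
  apply h5
  intro hcon
  exact hκx_not b hb (hcon (hκmem x))

lemma reach_all (hZcard : 2 * Fintype.card P - 1 ≤ (Zset wc).card)
    (hp2 : 2 ≤ Fintype.card P) (S : Finset (Fin n)) :
    Reach P (baseFam wc xM) S := by
  by_cases h : Zset wc ⊆ S
  · by_cases h2 : S = Finset.univ
    · exact h2 ▸ reach_of_mem univ_mem_baseFam
    · exact phase6 hZcard hp2 S h h2
  · exact phase5 hZcard hp2 S h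

end Assemble

section Card
variable {P : Type*} [PartialOrder P] [Fintype P] [Nonempty P] {n : ℕ}
  {wc : P ↪ Fin n} {xM : P}

lemma fimg_injective : Function.Injective (fimg wc : P → Finset (Fin n)) := by
  intro a b hab
  have h1 : fimg wc a ⊆ fimg wc b := by rw [hab]
  have h2 : fimg wc b ⊆ fimg wc a := by rw [hab]
  exact le_antisymm (fimg_subset_iff.mp h1) (fimg_subset_iff.mp h2)

lemma baseFam_card (hpos : 0 < n) (hZne : (Zset wc).Nonempty) :
    (baseFam wc xM).card = Fintype.card P + 1 := by
  classical
  have hint : Fin n := ⟨0, hpos⟩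
  have hfne : ∀ w : P, (fimg wc w).Nonempty := fun w => ⟨wc w, wc_mem_fimg le_rfl⟩
  have hfnu : ∀ w : P, fimg wc w ≠ Finset.univ := by
    intro w hcon
    obtain ⟨z, hz⟩ := hZne
    have : z ∈ fimg wc w := hcon ▸ Finset.mem_univ z
    exact (mem_Z_iff.mp hz) (fimg_subset_W this)
  have himcard : ((Finset.univ.erase xM).image (fimg wc)).card = Fintype.card P - 1 := by
    rw [Finset.card_image_of_injective _ fimg_injective,
      Finset.card_erase_of_mem (Finset.mem_univ _), Finset.card_univ]
  have hemptyne : (∅ : Finset (Fin n)) ∉ insert Finset.univ ((Finset.univ.erase xM).image (fimg wc)) := by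
    simp only [Finset.mem_insert, Finset.mem_image, not_or, not_exists]
    constructor
    · intro h
      have := h ▸ Finset.mem_univ hint
      simp at this
    · intro w
      rintro ⟨-, hcon⟩
      exact (hfne w).ne_empty hcon
  have hunivne : (Finset.univ : Finset (Fin n)) ∉ (Finset.univ.erase xM).image (fimg wc) := by
    simp only [Finset.mem_image, not_exists]
    rintro w ⟨-, hcon⟩
    exact hfnu w hcon
  rw [baseFam, Finset.card_insert_of_notMem hemptyne,
    Finset.card_insert_of_notMem hunivne, himcard]
  have : 1 ≤ Fintype.card P := Fintype.card_pos
  omega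

lemma baseFam_percolating (hZcard : 2 * Fintype.card P - 1 ≤ (Zset wc).card)
    (hp2 : 2 ≤ Fintype.card P) : IsPercolating P (baseFam wc xM) :=
  isPercolating_of_reach (fun S => reach_all hZcard hp2 S)

end Card

section Lower
variable {P : Type*} [PartialOrder P] [Fintype P] [Nonempty P] {n : ℕ}

lemma two_le_card_of_no_top (htop : ¬ ∃ m : P, IsTop m) : 2 ≤ Fintype.card P := by
  by_contra h
  push_neg at h
  have h1 : 1 ≤ Fintype.card P := Fintype.card_pos
  have h2 : Fintype.card P = 1 := by omega
  obtain ⟨a, ha⟩ := Fintype.card_eq_one_iff.mp h2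
  exact htop ⟨a, fun b => (ha b) ▸ le_refl a⟩

lemma copy_no_extreme (htop : ¬ ∃ m : P, IsTop m) (hbot : ¬ ∃ m : P, IsBot m)
    {F : Finset (Finset (Fin n))} {f : P → Finset (Fin n)}
    (hcopy : IsInducedCopy F f) (a : P) :
    f a ≠ ∅ ∧ f a ≠ Finset.univ := by
  obtain ⟨-, -, hiff⟩ := hcopy
  constructor
  · intro hcon
    refine hbot ⟨a, fun b => ?_⟩
    exact (hiff a b).mpr (by rw [hcon]; exact Finset.empty_subset _)
  · intro hcon
    refine htop ⟨a, fun b => ?_⟩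
    exact (hiff b a).mpr (by rw [hcon]; exact Finset.subset_univ _)

lemma lower_bound (htop : ¬ ∃ m : P, IsTop m) (hbot : ¬ ∃ m : P, IsBot m)
    (hpn : Fintype.card P ≤ n)
    (𝒜 : Finset (Finset (Fin n))) (hperc : IsPercolating P 𝒜) :
    Fintype.card P + 1 ≤ 𝒜.card := by
  classical
  obtain ⟨l, hnodup, hmem, hcopy⟩ := hperc
  have hp1 : 1 ≤ Fintype.card P := Fintype.card_pos
  have hn1 : 1 ≤ n := le_trans hp1 hpn
  have hempty : (∅ : Finset (Fin n)) ∈ 𝒜 := by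
    by_contra hc
    obtain ⟨i, hi⟩ := List.mem_iff_get.mp ((hmem ∅).mpr hc)
    obtain ⟨f, hf, a, ha⟩ := hcopy i
    exact (copy_no_extreme htop hbot hf a).1 (ha.trans hi)
  have huniv : (Finset.univ : Finset (Fin n)) ∈ 𝒜 := by
    by_contra hc
    obtain ⟨i, hi⟩ := List.mem_iff_get.mp ((hmem Finset.univ).mpr hc)
    obtain ⟨f, hf, a, ha⟩ := hcopy i
    exact (copy_no_extreme htop hbot hf a).2 (ha.trans hi)
  cases l with
  | nil =>
    have h𝒜 : 𝒜 = Finset.univ := by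
      apply Finset.eq_univ_iff_forall.mpr
      intro S
      by_contra hc
      exact List.not_mem_nil ((hmem S).mpr hc)
    rw [h𝒜, Finset.card_univ, Fintype.card_finset, Fintype.card_fin]
    calc Fintype.card P + 1 ≤ n + 1 := by omega
      _ ≤ 2 ^ n := Nat.succ_le_of_lt (Nat.lt_two_pow_self)
  | cons S₀ rest =>
    set l' := S₀ :: rest with hl'
    have hlen : 0 < l'.length := by simp [hl']
    obtain ⟨f, hf, a, ha⟩ := hcopy ⟨0, hlen⟩
    have hget : l'.get ⟨0, hlen⟩ = S₀ := rfl
    rw [hget] at ha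
    have hS₀ : S₀ ∉ 𝒜 := (hmem S₀).mp (by simp [hl'])
    have hfmem : ∀ b : P, f b ≠ S₀ → f b ∈ 𝒜 := by
      intro b hb
      have := hf.2.1 b
      rcases Finset.mem_union.mp this with h | h
      · exact h
      · exfalso
        rw [List.mem_toFinset] at h
        have : l'.take (0+1) = [S₀] := rfl
        rw [this] at h
        simp at h
        exact hb h
    have hsub : insert ∅ (insert Finset.univ ((Finset.univ.image f).erase S₀)) ⊆ 𝒜 := by
      intro T hT
      rcases Finset.mem_insert.mp hT with rfl | hT
      · exact hempty
      · rcases Finset.mem_insert.mp hT with rfl | hT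
        · exact huniv
        · obtain ⟨hne, hT2⟩ := Finset.mem_erase.mp hT
          obtain ⟨b, -, rfl⟩ := Finset.mem_image.mp hT2
          exact hfmem b hne
    have hcard : (insert ∅ (insert Finset.univ ((Finset.univ.image f).erase S₀))).card
        = Fintype.card P + 1 := by
      have hS₀im : S₀ ∈ Finset.univ.image f := Finset.mem_image.mpr ⟨a, Finset.mem_univ _, ha⟩
      have him : (Finset.univ.image f).card = Fintype.card P := by
        rw [Finset.card_image_of_injective _ hf.1, Finset.card_univ]
      have h1 : (Finset.univ : Finset (Fin n)) ∉ (Finset.univ.image f).erase S₀ := by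
        intro hc
        obtain ⟨-, hc2⟩ := Finset.mem_erase.mp hc
        obtain ⟨b, -, hb⟩ := Finset.mem_image.mp hc2
        exact (copy_no_extreme htop hbot hf b).2 hb
      have h2 : (∅ : Finset (Fin n)) ∉ insert Finset.univ ((Finset.univ.image f).erase S₀) := by
        intro hc
        rcases Finset.mem_insert.mp hc with hc | hc
        · have hne : (⟨0, by omega⟩ : Fin n) ∈ (∅ : Finset (Fin n)) := by
            rw [hc]; exact Finset.mem_univ _
          simp at hne
        · obtain ⟨-, hc2⟩ := Finset.mem_erase.mp hc
          obtain ⟨b, -, hb⟩ := Finset.mem_image.mp hc2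
          exact (copy_no_extreme htop hbot hf b).1 hb
      rw [Finset.card_insert_of_notMem h2, Finset.card_insert_of_notMem h1,
        Finset.card_erase_of_mem hS₀im, him]
      omega
    calc Fintype.card P + 1 = _ := hcard.symm
      _ ≤ 𝒜.card := Finset.card_le_card hsub

end Lower


/-- If `P` is a (non-empty) finite poset with `p` elements having
neither a greatest nor a least element, and `n ≥ 3p - 1`, then `sat_p(n, P) = p + 1`. -/
theorem statement15 (P : Type*) [PartialOrder P] [Fintype P] [Nonempty P]
    (htop : ¬ ∃ m : P, IsTop m) (hbot : ¬ ∃ m : P, IsBot m)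
    (n : ℕ) (hn : 3 * Fintype.card P - 1 ≤ n) :
    satP P n = Fintype.card P + 1 := by
  classical
  set p := Fintype.card P with hp
  have hp2 : 2 ≤ p := two_le_card_of_no_top htop
  have hpn : p ≤ n := by omega
  set wc : P ↪ Fin n := (Fintype.equivFin P).toEmbedding.trans (Fin.castLEEmb hpn) with hwc
  have hWcard : (Wset wc).card = p := by
    rw [Wset, Finset.card_map, Finset.card_univ]
  have hZcard' : (Zset wc).card = n - p := by
    rw [Zset, Finset.card_compl, hWcard, Fintype.card_fin]
  have hZcard : 2 * p - 1 ≤ (Zset wc).card := by rw [hZcard']; omega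
  have hZne : (Zset wc).Nonempty := by
    rw [← Finset.card_pos, hZcard']; omega
  set xM : P := Classical.arbitrary P with hxM
  have hperc : IsPercolating P (baseFam wc xM) := baseFam_percolating hZcard hp2
  have hcard : (baseFam wc xM).card = p + 1 := baseFam_card (by omega) hZne
  have hmem : p + 1 ∈ {k : ℕ | ∃ 𝒜 : Finset (Finset (Fin n)), IsPercolating P 𝒜 ∧ 𝒜.card = k} :=
    ⟨baseFam wc xM, hperc, hcard⟩
  refine le_antisymm (Nat.sInf_le hmem) (le_csInf ⟨p + 1, hmem⟩ ?_)
  rintro k ⟨𝒜, hperc', rfl⟩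
  exact lower_bound htop hbot hpn 𝒜 hperc'
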